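/- Let E be a real Banach space, P ⊆ E a normal cone with normal constant N, and ≤ the induced partial order. Suppose B : E → E is an increasing operator and there exists an increasing function f : (0, ∞) → (0, 1) such that Bv − Bu ≤ f(N·f(‖u − v‖)·‖u − v‖)·f(‖u − v‖)·(v − u) for all u, v ∈ E with u ≤ v, and suppose there exists x₀ ∈ E with x₀ ≤ Bx₀. Then the iterative sequence defined by xₙ₊₁ = Bxₙ (n = 0, 1, 2, …) is increasing (xₙ ≤ xₙ₊₁ for all n) and is a Cauchy sequence in E. -/

import Mathlib

/-- If `P` is a normal cone with normal constant `N` in a real Banach space `E`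
(order `u ≤ v ↔ v - u ∈ P`), `B : E → E` is increasing and satisfies
`Bv - Bu ≤ f(N·f(‖u-v‖)·‖u-v‖)·f(‖u-v‖) • (v - u)` whenever `u ≤ v` for some
increasing `f : (0,∞) → (0,1)`, and `x₀ ≤ B x₀`, then the iterative sequence
`xₙ = Bⁿ x₀` is increasing and Cauchy. -/
theorem iterates_increasing_and_cauchy
    {E : Type*} [NormedAddCommGroup E] [NormedSpace ℝ E] [CompleteSpace E]
    (P : Set E) (hP_nonempty : P.Nonempty) (hP_closed : IsClosed P)
    (hP_convex : Convex ℝ P)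
    (hP_smul : ∀ x ∈ P, ∀ l : ℝ, 0 ≤ l → l • x ∈ P)
    (hP_pointed : ∀ x : E, x ∈ P → -x ∈ P → x = 0)
    (N : ℝ) (hN : 0 < N)
    (hP_normal : ∀ x y : E, x ∈ P → y - x ∈ P → ‖x‖ ≤ N * ‖y‖)
    (B : E → E)
    (hB_inc : ∀ u v : E, v - u ∈ P → B v - B u ∈ P)
    (f : ℝ → ℝ)
    (hf_mono : ∀ s t : ℝ, 0 < s → s ≤ t → f s ≤ f t)
    (hf_range : ∀ t : ℝ, 0 < t → 0 < f t ∧ f t < 1)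
    (hB_contr : ∀ u v : E, v - u ∈ P →
      (f (N * f ‖u - v‖ * ‖u - v‖) * f ‖u - v‖) • (v - u) - (B v - B u) ∈ P)
    (x₀ : E) (hx₀ : B x₀ - x₀ ∈ P) :
    (∀ n : ℕ, B^[n + 1] x₀ - B^[n] x₀ ∈ P) ∧
    CauchySeq (fun n => B^[n] x₀) := by
  have hP_zero : (0 : E) ∈ P := by
    obtain ⟨p, hp⟩ := hP_nonempty
    simpa using hP_smul p hp 0 le_rfl
  have hP_add : ∀ a ∈ P, ∀ b ∈ P, a + b ∈ P := by
    intro a ha b hb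
    have h2 : ((1:ℝ)/2) • a + ((1:ℝ)/2) • b ∈ P :=
      hP_convex ha hb (by norm_num) (by norm_num) (by norm_num)
    have h3 := hP_smul _ h2 2 (by norm_num)
    have heq : (2:ℝ) • (((1:ℝ)/2) • a + ((1:ℝ)/2) • b) = a + b := by
      module
    rwa [heq] at h3
  have hd : ∀ n : ℕ, B^[n+1] x₀ - B^[n] x₀ ∈ P := by
    intro n
    induction n with
    | zero => simpa using hx₀
    | succ k ih =>
      simp only [Function.iterate_succ_apply'] at ih ⊢
      exact hB_inc _ _ ih
  refine ⟨hd, ?_⟩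
  set d0 : E := B x₀ - x₀ with hd0
  by_cases h0 : d0 = 0
  · have hfix : B x₀ = x₀ := by rwa [sub_eq_zero] at h0
    have hconst : ∀ n, B^[n] x₀ = x₀ := by
      intro n; induction n with
      | zero => simp
      | succ k ih => rw [Function.iterate_succ_apply', ih, hfix]
    have hcf : (fun n => B^[n] x₀) = fun _ => x₀ := funext hconst
    rw [hcf]
    exact cauchySeq_const x₀
  · set t0 : ℝ := ‖d0‖ with ht0
    have ht0pos : 0 < t0 := norm_pos_iff.mpr h0
    have hd0P : d0 ∈ P := by simpa using hd 0
    have hN1 : 1 ≤ N := by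
      have h1 := hP_normal d0 d0 hd0P (by simpa using hP_zero)
      nlinarith
    set T : ℝ := N * t0 with hT
    have hTpos : 0 < T := mul_pos hN ht0pos
    obtain ⟨hfT0, hfT1⟩ := hf_range T hTpos
    have hApos : 0 < N * f T * T := by positivity
    obtain ⟨hfA0, hfA1⟩ := hf_range _ hApos
    set c : ℝ := f (N * f T * T) * f T with hc
    have hc0 : 0 < c := mul_pos hfA0 hfT0
    have hc1 : c < 1 := by nlinarith
    have key : ∀ n : ℕ, c^n • d0 - (B^[n+1] x₀ - B^[n] x₀) ∈ P := by
      intro n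
      induction n with
      | zero => simpa [hd0] using hP_zero
      | succ k ih =>
        set dk : E := B^[k+1] x₀ - B^[k] x₀ with hdk
        have hdkP : dk ∈ P := hd k
        have htk_le : ‖dk‖ ≤ T := by
          have h1 := hP_normal dk (c^k • d0) hdkP ih
          have h2 : ‖c^k • d0‖ = c^k * t0 := by
            rw [norm_smul, Real.norm_eq_abs, abs_of_nonneg (pow_nonneg hc0.le k)]
          have h3 : c^k ≤ 1 := pow_le_one₀ hc0.le hc1.le
          rw [h2] at h1
          calc ‖dk‖ ≤ N * (c^k * t0) := h1
            _ ≤ N * (1 * t0) := by nlinarith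
            _ = T := by rw [hT]; ring
        have hcontr := hB_contr (B^[k] x₀) (B^[k+1] x₀) hdkP
        rw [← Function.iterate_succ_apply' B (k+1), ← Function.iterate_succ_apply' B k]
          at hcontr
        have hnn : ‖B^[k] x₀ - B^[k+1] x₀‖ = ‖dk‖ := by
          rw [hdk, norm_sub_rev]
        rw [hnn] at hcontr
        by_cases hz : dk = 0
        · have hzz : B^[k+1+1] x₀ - B^[k+1] x₀ = 0 := by
            apply hP_pointed _ (hd (k+1))
            have : (f (N * f ‖dk‖ * ‖dk‖) * f ‖dk‖) •
                (B^[k+1] x₀ - B^[k] x₀) - (B^[k+1+1] x₀ - B^[k+1] x₀)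
                = -(B^[k+1+1] x₀ - B^[k+1] x₀) := by
              rw [← hdk, hz, smul_zero, zero_sub]
            rwa [this] at hcontr
          rw [hzz, sub_zero]
          exact hP_smul d0 hd0P _ (pow_nonneg hc0.le _)
        · have htkpos : 0 < ‖dk‖ := norm_pos_iff.mpr hz
          set tk : ℝ := ‖dk‖
          obtain ⟨hftk0, hftk1⟩ := hf_range tk htkpos
          have hftk_le : f tk ≤ f T := hf_mono tk T htkpos htk_le
          have hainpos : 0 < N * f tk * tk := by positivity
          have hain_le : N * f tk * tk ≤ N * f T * T := by
            have h' : f tk * tk ≤ f T * T := mul_le_mul hftk_le htk_le htkpos.le hfT0.le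
            nlinarith [mul_le_mul_of_nonneg_left h' hN.le]
          obtain ⟨hfa0, _⟩ := hf_range _ hainpos
          have hfa_le : f (N * f tk * tk) ≤ f (N * f T * T) :=
            hf_mono _ _ hainpos hain_le
          set ck : ℝ := f (N * f tk * tk) * f tk with hck
          have hck0 : 0 ≤ ck := le_of_lt (mul_pos hfa0 hftk0)
          have hck_le : ck ≤ c := by
            rw [hck, hc]
            exact mul_le_mul hfa_le hftk_le hftk0.le hfA0.le
          -- assemble
          have hA1 : ck • dk - (B^[k+1+1] x₀ - B^[k+1] x₀) ∈ P := hcontr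
          have hA2 : ck • (c^k • d0 - dk) ∈ P := hP_smul _ ih ck hck0
          have hA3 : ((c - ck) * c^k) • d0 ∈ P :=
            hP_smul d0 hd0P _ (mul_nonneg (by linarith) (pow_nonneg hc0.le k))
          have hsum := hP_add _ hA1 _ (hP_add _ hA2 _ hA3)
          have hiden : ck • dk - (B^[k+1+1] x₀ - B^[k+1] x₀) +
              (ck • (c^k • d0 - dk) + ((c - ck) * c^k) • d0)
              = c^(k+1) • d0 - (B^[k+1+1] x₀ - B^[k+1] x₀) := by
            rw [pow_succ]
            module
          rwa [hiden] at hsum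
    have hdist : ∀ n : ℕ, dist (B^[n] x₀) (B^[n+1] x₀) ≤ (N * t0) * c^n := by
      intro n
      have h1 := hP_normal _ _ (hd n) (key n)
      have h2 : ‖c^n • d0‖ = c^n * t0 := by
        rw [norm_smul, Real.norm_eq_abs, abs_of_nonneg (pow_nonneg hc0.le n)]
      rw [h2] at h1
      calc dist (B^[n] x₀) (B^[n+1] x₀)
          = ‖B^[n+1] x₀ - B^[n] x₀‖ := by rw [dist_eq_norm, norm_sub_rev]
        _ ≤ N * (c^n * t0) := h1
        _ = (N * t0) * c^n := by ring
    exact cauchySeq_of_le_geometric c (N * t0) hc1 hdist
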